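/- The normalized bending energy of the elastic two-teardrop equals C_{2T} = 32(2m_T − 1)·F(π − α(m_T), m_T)². Concretely, since the two-teardrop consists of two congruent copies of the teardrop elastica, whose wavelike parametrization γ_w(x|m_T) has speed |γ_w′(x|m_T)| = (1 − m_T sin²x)^{−1/2}, this amounts to the identity 4·(∫_{a_T}^{b_T} (1 − m_T sin²x)^{−1/2} dx)·(∫_{a_T}^{b_T} 4 m_T cos²x·(1 − m_T sin²x)^{−1/2} dx) = 32(2m_T − 1)·F(π − α(m_T), m_T)², where a_T = −π + α(m_T) and b_T = π − α(m_T). -/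

import Mathlib

open Real MeasureTheory Set

noncomputable section

abbrev E2 := EuclideanSpace ℝ (Fin 2)

/-- The point of the Euclidean plane with coordinates `(a, b)`. -/
def mkE2 (a b : ℝ) : E2 := WithLp.toLp 2 ![a, b]
/-- Incomplete elliptic integral of the first kind `F(x,m)`. -/
def Fell (x m : ℝ) : ℝ := ∫ θ in (0:ℝ)..x, 1 / Real.sqrt (1 - m * Real.sin θ ^ 2)

/-- Incomplete elliptic integral of the second kind `E(x,m)`. -/
def Eell (x m : ℝ) : ℝ := ∫ θ in (0:ℝ)..x, Real.sqrt (1 - m * Real.sin θ ^ 2)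

/-- Complete elliptic integral of the first kind `K(m)`. -/
def Kc (m : ℝ) : ℝ := Fell (Real.pi / 2) m

/-- Complete elliptic integral of the second kind `E(m)`. -/
def Ec (m : ℝ) : ℝ := Eell (Real.pi / 2) m

/-- `α(m) = arcsin √(1/(2m))`. -/
def alph (m : ℝ) : ℝ := Real.arcsin (Real.sqrt (1 / (2 * m)))

/-- `G(x,m) = ∫₀ˣ (1 − 2m sin²θ)(1 − m sin²θ)^{−1/2} dθ = 2E(x,m) − F(x,m)`. -/
def Gw (x m : ℝ) : ℝ :=
  ∫ θ in (0:ℝ)..x, (1 - 2 * m * Real.sin θ ^ 2) / Real.sqrt (1 - m * Real.sin θ ^ 2)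

/-- `f(m) = ∫₀^{π−α(m)} (1 − 2m sin²θ)(1 − m sin²θ)^{−1/2} dθ`; its unique zero is `m_T`. -/
def fT (m : ℝ) : ℝ := Gw (Real.pi - alph m) m
/-- The wavelike parametrization `γ_w(x|m) = (G(x,m), −2√m cos x)`. -/
def gammaW (m : ℝ) : ℝ → E2 := fun x => mkE2 (Gw x m) (-2 * Real.sqrt m * Real.cos x)

/-- the normalized bending energy `L · B` of the elastic two-teardrop equals
`C_{2T} = 32(2m_T − 1)F(π − α(m_T), m_T)²`.  The two-teardrop consists of two congruent copies
of the teardrop elastica `γ_w(·|m_T)|_{[a_T, b_T]}`, whose speed is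
`|γ_w′(x|m_T)| = (1 − m_T sin²x)^{−1/2}`, so this amounts to the stated identity of
integrals, with `a_T = −π + α(m_T)` and `b_T = π − α(m_T)`. -/
lemma even_integral_aux (f : ℝ → ℝ) (hf : Continuous f) (hev : ∀ x, f (-x) = f x) (c : ℝ) :
    (∫ x in (-c)..c, f x) = 2 * ∫ x in (0:ℝ)..c, f x := by
  have h1 : (∫ x in (-c)..(0:ℝ), f x) = ∫ x in (0:ℝ)..c, f x := by
    have := intervalIntegral.integral_comp_neg f (a := 0) (b := c)
    simp only [hev, neg_zero] at this
    rw [← this]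
  rw [← intervalIntegral.integral_add_adjacent_intervals
    (hf.intervalIntegrable (-c) 0) (hf.intervalIntegrable 0 c), h1]
  ring


theorem stmt19 (mT : ℝ) (hmT : mT ∈ Set.Ioo (1/2 : ℝ) 1) (hmTzero : fT mT = 0) :
    (∀ x : ℝ, ‖deriv (gammaW mT) x‖ = 1 / Real.sqrt (1 - mT * Real.sin x ^ 2)) ∧
    4 * (∫ x in (-Real.pi + alph mT)..(Real.pi - alph mT),
          1 / Real.sqrt (1 - mT * Real.sin x ^ 2)) *
        (∫ x in (-Real.pi + alph mT)..(Real.pi - alph mT),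
          4 * mT * Real.cos x ^ 2 / Real.sqrt (1 - mT * Real.sin x ^ 2)) =
      32 * (2 * mT - 1) * (Fell (Real.pi - alph mT) mT) ^ 2 := by
  obtain ⟨hm2, hm1⟩ := hmT
  have hm0 : (0:ℝ) < mT := lt_trans (by norm_num) hm2
  have hq : ∀ x : ℝ, 0 < 1 - mT * Real.sin x ^ 2 := by
    intro x
    nlinarith [Real.sin_sq_le_one x, sq_nonneg (Real.sin x)]
  have hqc : Continuous fun x : ℝ => Real.sqrt (1 - mT * Real.sin x ^ 2) := by
    apply Real.continuous_sqrt.comp; continuity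
  have hqne : ∀ x : ℝ, Real.sqrt (1 - mT * Real.sin x ^ 2) ≠ 0 :=
    fun x => (Real.sqrt_pos.mpr (hq x)).ne'
  have hGcont : Continuous fun θ : ℝ =>
      (1 - 2 * mT * Real.sin θ ^ 2) / Real.sqrt (1 - mT * Real.sin θ ^ 2) :=
    Continuous.div (by continuity) hqc hqne
  have hFcont : Continuous fun θ : ℝ => 1 / Real.sqrt (1 - mT * Real.sin θ ^ 2) :=
    Continuous.div continuous_const hqc hqne
  have hCcont : Continuous fun θ : ℝ =>
      4 * mT * Real.cos θ ^ 2 / Real.sqrt (1 - mT * Real.sin θ ^ 2) :=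
    Continuous.div (by continuity) hqc hqne
  constructor
  · intro x
    set g' : ℝ := (1 - 2 * mT * Real.sin x ^ 2) / Real.sqrt (1 - mT * Real.sin x ^ 2) with hg'
    set h' : ℝ := 2 * Real.sqrt mT * Real.sin x with hh'
    have hG : HasDerivAt (fun y => Gw y mT) g' x := by
      unfold Gw
      exact intervalIntegral.integral_hasDerivAt_right
        (hGcont.intervalIntegrable 0 x)
        (hGcont.stronglyMeasurableAtFilter _ _) hGcont.continuousAt
    have hC : HasDerivAt (fun y => -2 * Real.sqrt mT * Real.cos y) h' x := by
      have := (Real.hasDerivAt_cos x).const_mul (-2 * Real.sqrt mT)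
      have e : h' = -2 * Real.sqrt mT * -Real.sin x := by rw [hh']; ring
      rw [e]; exact this
    have key : gammaW mT = fun y =>
        (Gw y mT) • (mkE2 1 0) + (-2 * Real.sqrt mT * Real.cos y) • (mkE2 0 1) := by
      funext y
      unfold gammaW mkE2
      ext i
      fin_cases i <;> simp
    have hd : HasDerivAt (gammaW mT) (g' • (mkE2 1 0) + h' • (mkE2 0 1)) x := by
      rw [key]
      exact (hG.smul_const _).add (hC.smul_const _)
    rw [hd.deriv]
    have hv : g' • (mkE2 1 0) + h' • (mkE2 0 1) = mkE2 g' h' := by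
      unfold mkE2
      ext i
      fin_cases i <;> simp
    rw [hv, EuclideanSpace.norm_eq]
    have hco : ∑ i, ‖(mkE2 g' h') i‖ ^ 2 = g' ^ 2 + h' ^ 2 := by
      simp [mkE2, Fin.sum_univ_two, sq_abs]
    rw [hco]
    have e1 : Real.sqrt (1 - mT * Real.sin x ^ 2) ^ 2 = 1 - mT * Real.sin x ^ 2 :=
      Real.sq_sqrt (hq x).le
    have e2 : Real.sqrt mT ^ 2 = mT := Real.sq_sqrt hm0.le
    have hsum : g' ^ 2 + h' ^ 2 = (1 / Real.sqrt (1 - mT * Real.sin x ^ 2)) ^ 2 := by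
      have eh : (2 * Real.sqrt mT * Real.sin x) ^ 2 = 4 * mT * Real.sin x ^ 2 := by
        rw [mul_pow, mul_pow, e2]; ring
      rw [hg', hh', div_pow, e1, eh, div_pow, one_pow, e1]
      field_simp [(hq x).ne']
      ring
    rw [hsum, Real.sqrt_sq (by positivity)]
  · have hbound : -Real.pi + alph mT = -(Real.pi - alph mT) := by ring
    set c : ℝ := Real.pi - alph mT with hc
    rw [hbound]
    have h1 : (∫ x in (-c)..c, 1 / Real.sqrt (1 - mT * Real.sin x ^ 2)) = 2 * Fell c mT := by
      rw [even_integral_aux _ hFcont (fun x => by simp) c]; rfl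
    have h2 : (∫ x in (-c)..c,
        (1 - 2 * mT * Real.sin x ^ 2) / Real.sqrt (1 - mT * Real.sin x ^ 2)) = 0 := by
      rw [even_integral_aux _ hGcont (fun x => by simp) c]
      have : Gw c mT = 0 := hmTzero
      unfold Gw at this
      rw [this]; ring
    have h3 : (∫ x in (-c)..c, 4 * mT * Real.cos x ^ 2 / Real.sqrt (1 - mT * Real.sin x ^ 2))
        = (4 * mT - 2) * (2 * Fell c mT) := by
      have hpt : ∀ x : ℝ, 4 * mT * Real.cos x ^ 2 / Real.sqrt (1 - mT * Real.sin x ^ 2)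
          = (4 * mT - 2) * (1 / Real.sqrt (1 - mT * Real.sin x ^ 2))
            + 2 * ((1 - 2 * mT * Real.sin x ^ 2) / Real.sqrt (1 - mT * Real.sin x ^ 2)) := by
        intro x
        have hcos : Real.cos x ^ 2 = 1 - Real.sin x ^ 2 := Real.cos_sq' x
        rw [hcos]
        field_simp
        ring
      calc (∫ x in (-c)..c, 4 * mT * Real.cos x ^ 2 / Real.sqrt (1 - mT * Real.sin x ^ 2))
          = ∫ x in (-c)..c,
            ((4 * mT - 2) * (1 / Real.sqrt (1 - mT * Real.sin x ^ 2))
              + 2 * ((1 - 2 * mT * Real.sin x ^ 2) / Real.sqrt (1 - mT * Real.sin x ^ 2))) := by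
            exact intervalIntegral.integral_congr (fun x _ => hpt x)
        _ = (4 * mT - 2) * (∫ x in (-c)..c, 1 / Real.sqrt (1 - mT * Real.sin x ^ 2))
              + 2 * ∫ x in (-c)..c,
                (1 - 2 * mT * Real.sin x ^ 2) / Real.sqrt (1 - mT * Real.sin x ^ 2) := by
            rw [intervalIntegral.integral_add
              ((hFcont.intervalIntegrable _ _).const_mul _)
              ((hGcont.intervalIntegrable _ _).const_mul _),
              intervalIntegral.integral_const_mul, intervalIntegral.integral_const_mul]
        _ = (4 * mT - 2) * (2 * Fell c mT) := by rw [h1, h2]; ring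
    rw [h1, h3]
    ring
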